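/- Let Ω ⊆ ℝ^N be a bounded open set with Lebesgue measure and p : Ω → ℝ measurable with 1 < p⁻ := inf_Ω p ≤ p⁺ := sup_Ω p < ∞. Let (u_n) and u be measurable real-valued functions on Ω with ∫_Ω |u(x)|^{p(x)} dx < ∞ and ∫_Ω |u_n(x) − u(x)|^{p(x)} dx → 0 as n → ∞. Then ∫_Ω | |u_n(x)|^{p(x)−2} u_n(x) − |u(x)|^{p(x)−2} u(x) |^{p(x)/(p(x)−1)} dx → 0 as n → ∞; that is, the map u ↦ |u|^{p(x)−2}u is continuous from L^{p(x)}(Ω) to L^{p(x)/(p(x)−1)}(Ω) in the sense of modular convergence. -/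

import Mathlib

open MeasureTheory Real Set Filter

section Helpers
open Real

lemma rpow_subadd {s : ℝ} (hs0 : 0 ≤ s) (hs1 : s ≤ 1) {x y : ℝ} (hx : 0 ≤ x) (hy : 0 ≤ y) :
    (x + y) ^ s ≤ x ^ s + y ^ s := by
  have h := NNReal.rpow_add_le_add_rpow x.toNNReal y.toNNReal hs0 hs1
  have := NNReal.coe_le_coe.2 h
  simpa [NNReal.coe_rpow, Real.coe_toNNReal x hx, Real.coe_toNNReal y hy] using this

lemma rpow_superadd {s : ℝ} (hs : 1 ≤ s) {x y : ℝ} (hx : 0 ≤ x) (hy : 0 ≤ y) :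
    x ^ s + y ^ s ≤ (x + y) ^ s := by
  have h := NNReal.add_rpow_le_rpow_add x.toNNReal y.toNNReal hs
  have := NNReal.coe_le_coe.2 h
  simpa [NNReal.coe_rpow, Real.coe_toNNReal x hx, Real.coe_toNNReal y hy] using this

lemma bern {s : ℝ} (hs : 1 ≤ s) {x y : ℝ} (hy : 0 ≤ y) (hyx : y ≤ x) :
    x ^ s - y ^ s ≤ s * x ^ (s - 1) * (x - y) := by
  have hx : 0 ≤ x := hy.trans hyx
  rcases eq_or_lt_of_le hx with h0 | h0
  · have hx0 : x = 0 := h0.symm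
    have hy0 : y = 0 := le_antisymm (by linarith) hy
    simp [hx0, hy0, Real.zero_rpow (by linarith : s ≠ 0)]
  · have hxne : x ≠ 0 := ne_of_gt h0
    have ht0 : 0 ≤ y / x := div_nonneg hy hx
    have h1 : 1 + s * (y / x - 1) ≤ (1 + (y / x - 1)) ^ s :=
      one_add_mul_self_le_rpow_one_add (by linarith) hs
    have h2 : (1 + (y / x - 1)) ^ s = (y / x) ^ s := by ring_nf
    have h3 : (y / x) ^ s * x ^ s = y ^ s := by
      rw [← Real.mul_rpow ht0 hx, div_mul_cancel₀ _ hxne]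
    have h4 : (1 + s * (y / x - 1)) * x ^ s ≤ (y / x) ^ s * x ^ s := by
      apply mul_le_mul_of_nonneg_right _ (Real.rpow_nonneg hx s)
      rw [← h2]; exact h1
    rw [h3] at h4
    have h5 : x ^ (s - 1) = x ^ s / x := Real.rpow_sub_one hxne s
    rw [h5]
    have : (1 + s * (y / x - 1)) * x ^ s = x ^ s + s * (y - x) * (x ^ s / x) := by
      field_simp
    rw [this] at h4
    nlinarith [h4]

lemma caseA {q : ℝ} (hq1 : 1 < q) (hq2 : q ≤ 2) (a b : ℝ) :
    |(|a| ^ (q - 2) * a - |b| ^ (q - 2) * b)| ≤ 2 * |a - b| ^ (q - 1) := by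
  have hs0 : (0:ℝ) < q - 1 := by linarith
  have hs1 : q - 1 ≤ 1 := by linarith
  suffices H : ∀ a b : ℝ, b ≤ a →
      |(|a| ^ (q - 2) * a - |b| ^ (q - 2) * b)| ≤ 2 * |a - b| ^ (q - 1) by
    rcases le_total b a with h | h
    · exact H a b h
    · have := H b a h
      rw [abs_sub_comm b a] at this
      rw [abs_sub_comm (|a| ^ (q - 2) * a)]
      exact this
  intro a b hba
  have habs : |a - b| = a - b := abs_of_nonneg (by linarith)
  have hphin : ∀ {t : ℝ}, 0 ≤ t → |t| ^ (q - 2) * t = t ^ (q - 1) := by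
    intro t ht
    rcases eq_or_ne t 0 with rfl | ht0
    · simp [Real.zero_rpow (by linarith : q - 1 ≠ 0)]
    · rw [abs_of_nonneg ht, show q - 1 = (q - 2) + 1 by ring,
        Real.rpow_add (lt_of_le_of_ne ht (Ne.symm ht0)), Real.rpow_one]
  rcases le_or_gt 0 b with hb | hb
  · have ha : 0 ≤ a := hb.trans hba
    rw [hphin ha, hphin hb, habs]
    have hmono : b ^ (q - 1) ≤ a ^ (q - 1) := Real.rpow_le_rpow hb hba (by linarith)
    rw [abs_of_nonneg (by linarith)]
    have : a ^ (q - 1) ≤ (a - b) ^ (q - 1) + b ^ (q - 1) := by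
      have := rpow_subadd hs0.le hs1 (x := a - b) (y := b) (by linarith) hb
      simpa [sub_add_cancel] using this
    nlinarith [Real.rpow_nonneg (show (0:ℝ) ≤ a - b by linarith) (q - 1)]
  · rcases le_or_gt 0 a with ha | ha
    · -- b < 0 ≤ a
      have hbn : |b| ^ (q - 2) * b = -((-b) ^ (q - 1)) := by
        have := hphin (show (0:ℝ) ≤ -b by linarith)
        rw [abs_neg] at this; nlinarith [this]
      rw [hphin ha, hbn, habs, sub_neg_eq_add]
      have h1 : a ^ (q - 1) ≤ (a - b) ^ (q - 1) :=
        Real.rpow_le_rpow ha (by linarith) (by linarith)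
      have h2 : (-b) ^ (q - 1) ≤ (a - b) ^ (q - 1) :=
        Real.rpow_le_rpow (by linarith) (by linarith) (by linarith)
      rw [abs_of_nonneg (add_nonneg (Real.rpow_nonneg ha _) (Real.rpow_nonneg (by linarith) _))]
      linarith
    · -- b ≤ a < 0
      have hae : |a| ^ (q - 2) * a = -((-a) ^ (q - 1)) := by
        have := hphin (show (0:ℝ) ≤ -a by linarith)
        rw [abs_neg] at this; nlinarith [this]
      have hbe : |b| ^ (q - 2) * b = -((-b) ^ (q - 1)) := by
        have := hphin (show (0:ℝ) ≤ -b by linarith)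
        rw [abs_neg] at this; nlinarith [this]
      rw [hae, hbe, habs]
      have hmono : (-a) ^ (q - 1) ≤ (-b) ^ (q - 1) :=
        Real.rpow_le_rpow (by linarith) (by linarith) (by linarith)
      rw [show -((-a) ^ (q - 1)) - -((-b) ^ (q - 1)) = (-b) ^ (q-1) - (-a) ^ (q-1) by ring,
        abs_of_nonneg (by linarith)]
      have : (-b) ^ (q - 1) ≤ (a - b) ^ (q - 1) + (-a) ^ (q - 1) := by
        have := rpow_subadd hs0.le hs1 (x := a - b) (y := -a) (by linarith) (by linarith)
        have he : a - b + -a = -b := by ring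
        rw [he] at this; exact this
      nlinarith [Real.rpow_nonneg (show (0:ℝ) ≤ a - b by linarith) (q - 1)]



lemma caseB {q : ℝ} (hq : 2 ≤ q) (a b : ℝ) :
    |(|a| ^ (q - 2) * a - |b| ^ (q - 2) * b)| ≤
      (q + 2 ^ q) * (max |a| |b|) ^ (q - 2) * |a - b| := by
  have hs : (1:ℝ) ≤ q - 1 := by linarith
  have h2q : (0:ℝ) < 2 ^ q := Real.rpow_pos_of_pos two_pos q
  suffices H : ∀ a b : ℝ, b ≤ a →
      |(|a| ^ (q - 2) * a - |b| ^ (q - 2) * b)| ≤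
        (q + 2 ^ q) * (max |a| |b|) ^ (q - 2) * |a - b| by
    rcases le_total b a with h | h
    · exact H a b h
    · have := H b a h
      rw [abs_sub_comm b a, max_comm] at this
      rw [abs_sub_comm (|a| ^ (q - 2) * a)]
      exact this
  intro a b hba
  set M : ℝ := max |a| |b| with hM
  have hM0 : 0 ≤ M := le_trans (abs_nonneg a) (le_max_left _ _)
  have haM : |a| ≤ M := le_max_left _ _
  have hbM : |b| ≤ M := le_max_right _ _
  have habs : |a - b| = a - b := abs_of_nonneg (by linarith)
  have hMpow : 0 ≤ M ^ (q - 2) := Real.rpow_nonneg hM0 _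
  have hphin : ∀ {t : ℝ}, 0 ≤ t → |t| ^ (q - 2) * t = t ^ (q - 1) := by
    intro t ht
    rcases eq_or_ne t 0 with rfl | ht0
    · simp [Real.zero_rpow (by linarith : q - 1 ≠ 0)]
    · rw [abs_of_nonneg ht, show q - 1 = (q - 2) + 1 by ring,
        Real.rpow_add (lt_of_le_of_ne ht (Ne.symm ht0)), Real.rpow_one]
  rcases le_or_gt 0 b with hb | hb
  · have ha : 0 ≤ a := hb.trans hba
    rw [hphin ha, hphin hb, habs]
    have hmono : b ^ (q - 1) ≤ a ^ (q - 1) := Real.rpow_le_rpow hb hba (by linarith)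
    rw [abs_of_nonneg (by linarith)]
    have h1 : a ^ (q - 1) - b ^ (q - 1) ≤ (q - 1) * a ^ (q - 2) * (a - b) := by
      have := bern hs hb hba
      rw [show q - 1 - 1 = q - 2 by ring] at this
      exact this
    have h2 : a ^ (q - 2) ≤ M ^ (q - 2) :=
      Real.rpow_le_rpow ha (le_trans (le_abs_self a) haM) (by linarith)
    calc a ^ (q - 1) - b ^ (q - 1) ≤ (q - 1) * a ^ (q - 2) * (a - b) := h1
      _ ≤ (q + 2 ^ q) * M ^ (q - 2) * (a - b) := by
          apply mul_le_mul_of_nonneg_right _ (by linarith : (0:ℝ) ≤ a - b)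
          exact mul_le_mul (by linarith) h2 (Real.rpow_nonneg ha _) (by linarith)
  · rcases le_or_gt 0 a with ha | ha
    · -- b < 0 ≤ a
      have hbn : |b| ^ (q - 2) * b = -((-b) ^ (q - 1)) := by
        have := hphin (show (0:ℝ) ≤ -b by linarith)
        rw [abs_neg] at this; nlinarith [this]
      rw [hphin ha, hbn, habs, sub_neg_eq_add,
        abs_of_nonneg (add_nonneg (Real.rpow_nonneg ha _) (Real.rpow_nonneg (by linarith) _))]
      have h1 : a ^ (q - 1) + (-b) ^ (q - 1) ≤ (a - b) ^ (q - 1) := by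
        have := rpow_superadd hs ha (show (0:ℝ) ≤ -b by linarith)
        rw [show a + -b = a - b by ring] at this
        exact this
      have hab0 : (0:ℝ) < a - b := by linarith
      have h2 : (a - b) ^ (q - 1) = (a - b) ^ (q - 2) * (a - b) := by
        rw [show q - 1 = (q - 2) + 1 by ring, Real.rpow_add hab0, Real.rpow_one]
      have h3 : (a - b) ^ (q - 2) ≤ 2 ^ q * M ^ (q - 2) := by
        have hle : a - b ≤ 2 * M := by
          have : a ≤ M := le_trans (le_abs_self a) haM
          have : -b ≤ M := le_trans (le_abs_self (-b)) (by rwa [abs_neg]); linarith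
        calc (a - b) ^ (q - 2) ≤ (2 * M) ^ (q - 2) :=
              Real.rpow_le_rpow hab0.le hle (by linarith)
          _ = 2 ^ (q - 2) * M ^ (q - 2) := Real.mul_rpow (by norm_num) hM0
          _ ≤ 2 ^ q * M ^ (q - 2) := by
              have : (2:ℝ) ^ (q - 2) ≤ 2 ^ q :=
                Real.rpow_le_rpow_of_exponent_le one_le_two (by linarith)
              nlinarith
      calc a ^ (q - 1) + (-b) ^ (q - 1) ≤ (a - b) ^ (q - 2) * (a - b) := by rw [← h2]; exact h1
        _ ≤ 2 ^ q * M ^ (q - 2) * (a - b) := by nlinarith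
        _ ≤ (q + 2 ^ q) * M ^ (q - 2) * (a - b) := by
            apply mul_le_mul_of_nonneg_right _ hab0.le
            exact mul_le_mul_of_nonneg_right (by linarith) hMpow
    · -- b ≤ a < 0
      have hae : |a| ^ (q - 2) * a = -((-a) ^ (q - 1)) := by
        have := hphin (show (0:ℝ) ≤ -a by linarith)
        rw [abs_neg] at this; nlinarith [this]
      have hbe : |b| ^ (q - 2) * b = -((-b) ^ (q - 1)) := by
        have := hphin (show (0:ℝ) ≤ -b by linarith)
        rw [abs_neg] at this; nlinarith [this]
      rw [hae, hbe, habs]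
      have hmono : (-a) ^ (q - 1) ≤ (-b) ^ (q - 1) :=
        Real.rpow_le_rpow (by linarith) (by linarith) (by linarith)
      rw [show -((-a) ^ (q - 1)) - -((-b) ^ (q - 1)) = (-b) ^ (q-1) - (-a) ^ (q-1) by ring,
        abs_of_nonneg (by linarith)]
      have h1 : (-b) ^ (q - 1) - (-a) ^ (q - 1) ≤ (q - 1) * (-b) ^ (q - 2) * (a - b) := by
        have := bern hs (show (0:ℝ) ≤ -a by linarith) (show -a ≤ -b by linarith)
        rw [show q - 1 - 1 = q - 2 by ring, show -b - -a = a - b by ring] at this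
        exact this
      have h2 : (-b) ^ (q - 2) ≤ M ^ (q - 2) := by
        apply Real.rpow_le_rpow (by linarith) _ (by linarith)
        rw [show -b = |b| from (abs_of_neg hb).symm] at *; exact hbM
      calc (-b) ^ (q - 1) - (-a) ^ (q - 1) ≤ (q - 1) * (-b) ^ (q - 2) * (a - b) := h1
        _ ≤ (q + 2 ^ q) * M ^ (q - 2) * (a - b) := by
            apply mul_le_mul_of_nonneg_right _ (by linarith : (0:ℝ) ≤ a - b)
            exact mul_le_mul (by linarith) h2
              (Real.rpow_nonneg (by linarith) _) (by linarith)


lemma two_split {e x y : ℝ} (he : 0 ≤ e) (hx : 0 ≤ x) (hy : 0 ≤ y) :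
    (x + y) ^ e ≤ 2 ^ e * (x ^ e + y ^ e) := by
  have hm : x + y ≤ 2 * max x y := by
    rcases max_cases x y with ⟨h, h'⟩ | ⟨h, h'⟩ <;> rw [h] <;> linarith
  have hmax_nn : (0:ℝ) ≤ max x y := le_trans hx (le_max_left _ _)
  calc (x + y) ^ e ≤ (2 * max x y) ^ e := Real.rpow_le_rpow (by linarith) hm he
    _ = 2 ^ e * (max x y) ^ e := Real.mul_rpow (by norm_num) hmax_nn
    _ ≤ 2 ^ e * (x ^ e + y ^ e) := by
        apply mul_le_mul_of_nonneg_left _ (Real.rpow_nonneg (by norm_num) _)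
        rcases max_cases x y with ⟨h, _⟩ | ⟨h, _⟩ <;> rw [h]
        · linarith [Real.rpow_nonneg hy e]
        · linarith [Real.rpow_nonneg hx e]

lemma abs_phi {q : ℝ} (hq : 1 < q) (a : ℝ) : |(|a| ^ (q - 2) * a)| = |a| ^ (q - 1) := by
  rcases eq_or_ne a 0 with rfl | ha
  · simp [Real.zero_rpow (by linarith : q - 1 ≠ 0)]
  · have h0 : (0:ℝ) < |a| := abs_pos.2 ha
    rw [abs_mul, abs_of_nonneg (Real.rpow_nonneg (abs_nonneg a) _)]
    rw [show q - 1 = (q - 2) + 1 by ring, Real.rpow_add h0, Real.rpow_one]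

lemma rev {pm Q : ℝ} (hpm : 1 < pm) (hQ : pm ≤ Q) :
    ∃ D : ℝ, 0 ≤ D ∧ ∀ q, pm ≤ q → q ≤ Q → ∀ a b : ℝ,
      |a - b| ^ q ≤ D * (|(|a| ^ (q - 2) * a - |b| ^ (q - 2) * b)| ^ (q / (q - 1)) + |b| ^ q) := by
  set Q' : ℝ := pm / (pm - 1) with hQ'def
  refine ⟨2 ^ Q * (2 ^ Q' + 1), by positivity, ?_⟩
  intro q hq1 hq2 a b
  have hq1' : 1 < q := lt_of_lt_of_le hpm hq1
  have hqs : 0 < q - 1 := by linarith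
  set q' : ℝ := q / (q - 1) with hq'def
  have hq'0 : 0 < q' := div_pos (by linarith) hqs
  have hq'Q : q' ≤ Q' := by
    rw [hq'def, hQ'def, div_le_div_iff₀ hqs (by linarith)]
    nlinarith
  have hmul : (q - 1) * q' = q := by
    rw [hq'def]; field_simp
  clear_value q' Q'
  set g : ℝ := |(|a| ^ (q - 2) * a - |b| ^ (q - 2) * b)| ^ q' with hgdef
  have hgnn : 0 ≤ g := Real.rpow_nonneg (abs_nonneg _) _
  have hbq : (0:ℝ) ≤ |b| ^ q := Real.rpow_nonneg (abs_nonneg _) _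
  -- |a|^q ≤ 2^{q'} (g + |b|^q)
  have key_a : |a| ^ q ≤ 2 ^ Q' * (g + |b| ^ q) := by
    have h1 : |a| ^ q = |(|a| ^ (q - 2) * a)| ^ q' := by
      rw [abs_phi hq1', ← Real.rpow_mul (abs_nonneg a), hmul]
    have h2 : |(|a| ^ (q - 2) * a)| ≤
        |(|a| ^ (q - 2) * a - |b| ^ (q - 2) * b)| + |(|b| ^ (q - 2) * b)| := by
      calc |(|a| ^ (q - 2) * a)|
          = |(|a| ^ (q - 2) * a - |b| ^ (q - 2) * b) + |b| ^ (q - 2) * b| := by ring_nf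
        _ ≤ _ := abs_add_le _ _
    have h3 : |(|a| ^ (q - 2) * a)| ^ q' ≤
        (|(|a| ^ (q - 2) * a - |b| ^ (q - 2) * b)| + |(|b| ^ (q - 2) * b)|) ^ q' :=
      Real.rpow_le_rpow (abs_nonneg _) h2 hq'0.le
    have h4 : (|(|a| ^ (q - 2) * a - |b| ^ (q - 2) * b)| + |(|b| ^ (q - 2) * b)|) ^ q' ≤
        2 ^ q' * (g + |(|b| ^ (q - 2) * b)| ^ q') :=
      two_split hq'0.le (abs_nonneg _) (abs_nonneg _)
    have h5 : |(|b| ^ (q - 2) * b)| ^ q' = |b| ^ q := by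
      rw [abs_phi hq1', ← Real.rpow_mul (abs_nonneg b), hmul]
    have h6 : (2:ℝ) ^ q' ≤ 2 ^ Q' := Real.rpow_le_rpow_of_exponent_le one_le_two hq'Q
    rw [h5] at h4
    rw [h1]
    calc |(|a| ^ (q - 2) * a)| ^ q' ≤ 2 ^ q' * (g + |b| ^ q) := le_trans h3 h4
      _ ≤ 2 ^ Q' * (g + |b| ^ q) := mul_le_mul_of_nonneg_right h6 (by linarith)
  have habs : |a - b| ≤ |a| + |b| := abs_sub _ _
  have hq0 : (0:ℝ) < q := by linarith
  have step1 : |a - b| ^ q ≤ 2 ^ q * (|a| ^ q + |b| ^ q) := by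
    calc |a - b| ^ q ≤ (|a| + |b|) ^ q :=
          Real.rpow_le_rpow (abs_nonneg _) habs hq0.le
      _ ≤ 2 ^ q * (|a| ^ q + |b| ^ q) := two_split hq0.le (abs_nonneg _) (abs_nonneg _)
  have h2q : (2:ℝ) ^ q ≤ 2 ^ Q := Real.rpow_le_rpow_of_exponent_le one_le_two hq2
  have h2Q'nn : (0:ℝ) ≤ (2:ℝ) ^ Q' := Real.rpow_nonneg (by norm_num) _
  have h2Qnn : (0:ℝ) < (2:ℝ) ^ Q := Real.rpow_pos_of_pos two_pos Q
  calc |a - b| ^ q ≤ 2 ^ q * (|a| ^ q + |b| ^ q) := step1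
    _ ≤ 2 ^ Q * (|a| ^ q + |b| ^ q) := by
        apply mul_le_mul_of_nonneg_right h2q
        positivity
    _ ≤ 2 ^ Q * (2 ^ Q' * (g + |b| ^ q) + |b| ^ q) := by
        apply mul_le_mul_of_nonneg_left _ h2Qnn.le
        linarith [key_a]
    _ ≤ 2 ^ Q * (2 ^ Q' + 1) * (g + |b| ^ q) := by
        rw [mul_assoc]
        apply mul_le_mul_of_nonneg_left _ h2Qnn.le
        nlinarith [hgnn, hbq, h2Q'nn]



lemma key {pm Q : ℝ} (hpm : 1 < pm) (hQ : pm ≤ Q) {ε : ℝ} (hε : 0 < ε) :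
    ∃ C : ℝ, 0 ≤ C ∧ ∀ q, pm ≤ q → q ≤ Q → ∀ a b : ℝ,
      |(|a| ^ (q - 2) * a - |b| ^ (q - 2) * b)| ^ (q / (q - 1)) ≤
        C * |a - b| ^ q + ε * |b| ^ q := by
  set Q' : ℝ := pm / (pm - 1) with hQ'def
  have hQ'1 : 1 ≤ Q' := by
    rw [hQ'def, le_div_iff₀ (by linarith)]; linarith
  set K : ℝ := Q + 2 ^ Q with hKdef
  have hK1 : 1 ≤ K := by
    have : (0:ℝ) < 2 ^ Q := Real.rpow_pos_of_pos two_pos Q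
    rw [hKdef]; linarith
  set A : ℝ := K ^ Q' * 2 ^ Q with hAdef
  have hA1 : 1 ≤ A := by
    have h1 : (1:ℝ) ≤ K ^ Q' := Real.one_le_rpow hK1 (by linarith)
    have h2 : (1:ℝ) ≤ 2 ^ Q := Real.one_le_rpow one_le_two (by linarith)
    nlinarith
  set lam : ℝ := max 1 (A / ε) with hlamdef
  have hlam1 : 1 ≤ lam := le_max_left _ _
  have hlam0 : 0 < lam := by linarith
  have hAlam : A / lam ≤ ε := by
    rw [div_le_iff₀ hlam0]
    calc A = ε * (A / ε) := by field_simp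
      _ ≤ ε * lam := by
          exact mul_le_mul_of_nonneg_left (le_max_right _ _) hε.le
  have hlamQ : (0:ℝ) ≤ lam ^ (Q - 1) := Real.rpow_nonneg hlam0.le _
  clear_value Q' K A lam
  refine ⟨max (2 ^ Q') (A * (1 + lam ^ (Q - 1))), le_trans (by positivity) (le_max_left _ _),
    ?_⟩
  intro q hq1 hq2 a b
  have hq1' : 1 < q := lt_of_lt_of_le hpm hq1
  have hqs : 0 < q - 1 := by linarith
  set q' : ℝ := q / (q - 1) with hq'def
  have hq'0 : 0 < q' := div_pos (by linarith) hqs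
  have hq'Q : q' ≤ Q' := by
    rw [hq'def, hQ'def, div_le_div_iff₀ hqs (by linarith)]
    nlinarith
  have hmul : (q - 1) * q' = q := by
    rw [hq'def]; field_simp
  clear_value q'
  have hbq : (0:ℝ) ≤ ε * |b| ^ q := by positivity
  have habq : (0:ℝ) ≤ |a - b| ^ q := Real.rpow_nonneg (abs_nonneg _) _
  rcases le_or_gt q 2 with hle | hgt
  · -- case q ≤ 2
    have h1 : |(|a| ^ (q - 2) * a - |b| ^ (q - 2) * b)| ^ q' ≤ (2 * |a - b| ^ (q - 1)) ^ q' :=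
      Real.rpow_le_rpow (abs_nonneg _) (caseA hq1' hle a b) hq'0.le
    have h2 : (2 * |a - b| ^ (q - 1)) ^ q' = 2 ^ q' * |a - b| ^ q := by
      rw [Real.mul_rpow (by norm_num) (Real.rpow_nonneg (abs_nonneg _) _),
        ← Real.rpow_mul (abs_nonneg _), hmul]
    have h3 : (2:ℝ) ^ q' ≤ 2 ^ Q' := Real.rpow_le_rpow_of_exponent_le one_le_two hq'Q
    calc |(|a| ^ (q - 2) * a - |b| ^ (q - 2) * b)| ^ q' ≤ 2 ^ q' * |a - b| ^ q := by
          rw [← h2]; exact h1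
      _ ≤ max (2 ^ Q') (A * (1 + lam ^ (Q - 1))) * |a - b| ^ q := by
          exact mul_le_mul_of_nonneg_right (le_trans h3 (le_max_left _ _)) habq
      _ ≤ _ := by linarith
  · -- case 2 < q
    have hr0 : 0 < (q - 2) * q' := mul_pos (by linarith) hq'0
    set r : ℝ := (q - 2) * q' with hrdef
    clear_value r
    have hrQ : r ≤ Q := by
      have : r = q - q' := by rw [hrdef, hq'def]; field_simp; ring
      have : r ≤ q := by rw [this]; linarith
      linarith
    -- step 1: pointwise bound raised to q'
    have hKq : q + 2 ^ q ≤ K := by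
      have : (2:ℝ) ^ q ≤ 2 ^ Q := Real.rpow_le_rpow_of_exponent_le one_le_two hq2
      rw [hKdef]; linarith
    have hK0 : (0:ℝ) ≤ q + 2 ^ q := by
      have : (0:ℝ) < 2 ^ q := Real.rpow_pos_of_pos two_pos q
      linarith
    have hMle : max |a| |b| ≤ |a - b| + |b| := by
      rcases max_cases |a| |b| with ⟨h, _⟩ | ⟨h, _⟩ <;> rw [h]
      · calc |a| = |a - b + b| := by ring_nf
          _ ≤ |a - b| + |b| := abs_add_le _ _
      · linarith [abs_nonneg (a - b)]
    have hb1 : |(|a| ^ (q - 2) * a - |b| ^ (q - 2) * b)| ≤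
        K * (|a - b| + |b|) ^ (q - 2) * |a - b| := by
      calc |(|a| ^ (q - 2) * a - |b| ^ (q - 2) * b)| ≤
            (q + 2 ^ q) * (max |a| |b|) ^ (q - 2) * |a - b| := caseB hgt.le a b
        _ ≤ K * (|a - b| + |b|) ^ (q - 2) * |a - b| := by
            apply mul_le_mul_of_nonneg_right _ (abs_nonneg _)
            exact mul_le_mul hKq
              (Real.rpow_le_rpow (le_trans (abs_nonneg _) (le_max_left _ _)) hMle
                (by linarith))
              (Real.rpow_nonneg (le_trans (abs_nonneg _) (le_max_left _ _)) _)
              (by linarith)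
    have hXnn : (0:ℝ) ≤ (|a - b| + |b|) ^ (q - 2) := Real.rpow_nonneg (by positivity) _
    have h2 : |(|a| ^ (q - 2) * a - |b| ^ (q - 2) * b)| ^ q' ≤
        K ^ q' * ((|a - b| + |b|) ^ r * |a - b| ^ q') := by
      calc |(|a| ^ (q - 2) * a - |b| ^ (q - 2) * b)| ^ q' ≤
            (K * (|a - b| + |b|) ^ (q - 2) * |a - b|) ^ q' :=
          Real.rpow_le_rpow (abs_nonneg _) hb1 hq'0.le
        _ = K ^ q' * ((|a - b| + |b|) ^ r * |a - b| ^ q') := by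
            rw [Real.mul_rpow (mul_nonneg (by linarith) hXnn) (abs_nonneg _),
              Real.mul_rpow (by linarith) hXnn, ← Real.rpow_mul (by positivity), ← hrdef,
              mul_assoc]
    -- step 2: split (|a-b|+|b|)^r
    have hsplit : (|a - b| + |b|) ^ r ≤ 2 ^ Q * (|a - b| ^ r + |b| ^ r) := by
      have hm : |a - b| + |b| ≤ 2 * max |a - b| |b| := by
        rcases max_cases |a - b| |b| with ⟨h, h'⟩ | ⟨h, h'⟩ <;> rw [h] <;> linarith
      have hmax_nn : (0:ℝ) ≤ max |a - b| |b| := le_trans (abs_nonneg _) (le_max_left _ _)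
      calc (|a - b| + |b|) ^ r ≤ (2 * max |a - b| |b|) ^ r :=
            Real.rpow_le_rpow (by positivity) hm hr0.le
        _ = 2 ^ r * (max |a - b| |b|) ^ r := Real.mul_rpow (by norm_num) hmax_nn
        _ ≤ 2 ^ Q * (|a - b| ^ r + |b| ^ r) := by
            have h2r : (2:ℝ) ^ r ≤ 2 ^ Q := Real.rpow_le_rpow_of_exponent_le one_le_two hrQ
            have hmr : (max |a - b| |b|) ^ r ≤ |a - b| ^ r + |b| ^ r := by
              rcases max_cases |a - b| |b| with ⟨h, _⟩ | ⟨h, _⟩ <;> rw [h]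
              · linarith [Real.rpow_nonneg (abs_nonneg b) r]
              · linarith [Real.rpow_nonneg (abs_nonneg (a - b)) r]
            exact mul_le_mul h2r hmr (Real.rpow_nonneg hmax_nn _)
              (by positivity)
    -- step 3: Young's inequality on the cross term
    set X : ℝ := |a - b| ^ q' with hXdef
    set Yb : ℝ := |b| ^ r with hYdef
    have hXnn' : (0:ℝ) ≤ X := Real.rpow_nonneg (abs_nonneg _) _
    have hYnn : (0:ℝ) ≤ Yb := Real.rpow_nonneg (abs_nonneg _) _
    clear_value X Yb
    have hrq : r + q' = q := by
      rw [hrdef, hq'def]; field_simp; ring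
    have habr : |a - b| ^ r * X = |a - b| ^ q := by
      rw [hXdef, ← Real.rpow_add' (abs_nonneg _) (by rw [hrq]; linarith)]
      rw [hrq]
    have hrho : (1:ℝ) < q - 1 := by linarith
    have hrho' : (1:ℝ) ≤ (q - 1) / (q - 2) := by
      rw [le_div_iff₀ (by linarith)]; linarith
    have hconj : Real.HolderConjugate (q - 1) ((q - 1) / (q - 2)) := by
      rw [Real.holderConjugate_iff]; constructor
      · exact hrho
      · rw [inv_div]; field_simp; ring
    have hyoung : Yb * X ≤ lam ^ (Q - 1) * |a - b| ^ q + |b| ^ q / lam := by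
      have h0 := Real.young_inequality_of_nonneg
        (mul_nonneg hlam0.le hXnn') (div_nonneg hYnn hlam0.le) hconj
      have he : lam * X * (Yb / lam) = Yb * X := by field_simp
      rw [he] at h0
      have hXrho : (lam * X) ^ (q - 1) = lam ^ (q - 1) * |a - b| ^ q := by
        rw [Real.mul_rpow hlam0.le hXnn', hXdef, ← Real.rpow_mul (abs_nonneg _)]
        congr 1
        rw [hq'def]; field_simp
      have hYrho : (Yb / lam) ^ ((q - 1) / (q - 2)) ≤ |b| ^ q / lam := by
        rw [Real.div_rpow hYnn hlam0.le, hYdef, ← Real.rpow_mul (abs_nonneg _)]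
        have hexp : r * ((q - 1) / (q - 2)) = q := by
          rw [hrdef, hq'def]
          have h1ne : q - 1 ≠ 0 := by linarith
          have h2ne : q - 2 ≠ 0 := by linarith
          field_simp
        rw [hexp]
        apply div_le_div_of_nonneg_left (Real.rpow_nonneg (abs_nonneg _) _) hlam0
        · calc lam = lam ^ (1:ℝ) := (Real.rpow_one _).symm
            _ ≤ lam ^ ((q - 1) / (q - 2)) :=
              Real.rpow_le_rpow_of_exponent_le hlam1 hrho'
      have hlamle : lam ^ (q - 1) ≤ lam ^ (Q - 1) :=
        Real.rpow_le_rpow_of_exponent_le hlam1 (by linarith)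
      calc Yb * X ≤ (lam * X) ^ (q - 1) / (q - 1) + (Yb / lam) ^ ((q - 1) / (q - 2)) / ((q - 1) / (q - 2)) := h0
        _ ≤ (lam * X) ^ (q - 1) + (Yb / lam) ^ ((q - 1) / (q - 2)) := by
            have g1 : (0:ℝ) ≤ (lam * X) ^ (q - 1) := Real.rpow_nonneg (mul_nonneg hlam0.le hXnn') _
            have g2 : (0:ℝ) ≤ (Yb / lam) ^ ((q - 1) / (q - 2)) :=
              Real.rpow_nonneg (div_nonneg hYnn hlam0.le) _
            have := div_le_self g1 hrho.le
            have := div_le_self g2 hrho'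
            linarith
        _ ≤ lam ^ (Q - 1) * |a - b| ^ q + |b| ^ q / lam := by
            rw [hXrho]
            have : lam ^ (q-1) * |a - b| ^ q ≤ lam ^ (Q-1) * |a - b| ^ q :=
              mul_le_mul_of_nonneg_right hlamle habq
            linarith [hYrho]
    -- step 4: assemble
    have hKq' : K ^ q' * 2 ^ Q ≤ A := by
      rw [hAdef]
      have : K ^ q' ≤ K ^ Q' := Real.rpow_le_rpow_of_exponent_le hK1 hq'Q
      have h2Q : (0:ℝ) < 2 ^ Q := Real.rpow_pos_of_pos two_pos Q
      exact mul_le_mul_of_nonneg_right this h2Q.le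
    have hKq'nn : (0:ℝ) ≤ K ^ q' := Real.rpow_nonneg (by linarith) _
    have h2Qnn : (0:ℝ) ≤ (2:ℝ) ^ Q := (Real.rpow_pos_of_pos two_pos Q).le
    calc |(|a| ^ (q - 2) * a - |b| ^ (q - 2) * b)| ^ q'
        ≤ K ^ q' * ((|a - b| + |b|) ^ r * X) := h2
      _ ≤ K ^ q' * (2 ^ Q * (|a - b| ^ r + Yb) * X) := by
          apply mul_le_mul_of_nonneg_left _ hKq'nn
          exact mul_le_mul_of_nonneg_right hsplit hXnn'
      _ = K ^ q' * 2 ^ Q * (|a - b| ^ q + Yb * X) := by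
          rw [← habr]; ring
      _ ≤ A * (|a - b| ^ q + (lam ^ (Q - 1) * |a - b| ^ q + |b| ^ q / lam)) := by
          apply mul_le_mul hKq' (by linarith [hyoung]) _ (by linarith)
          have : (0:ℝ) ≤ Yb * X := mul_nonneg hYnn hXnn'
          linarith
      _ = A * (1 + lam ^ (Q - 1)) * |a - b| ^ q + (A / lam) * |b| ^ q := by
          ring
      _ ≤ max (2 ^ Q') (A * (1 + lam ^ (Q - 1))) * |a - b| ^ q + ε * |b| ^ q := by
          apply add_le_add
          · exact mul_le_mul_of_nonneg_right (le_max_right _ _) habq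
          · exact mul_le_mul_of_nonneg_right hAlam (Real.rpow_nonneg (abs_nonneg _) _)

end Helpers


/-- modular continuity of the odd power map
`u ↦ |u|^{p(x)-2} u` from `L^{p(x)}` to `L^{p(x)/(p(x)-1)}`. -/
theorem power_map_modular_continuous {N : ℕ}
    (Ω : Set (Fin N → ℝ)) (hΩo : IsOpen Ω) (hΩb : Bornology.IsBounded Ω)
    (p : (Fin N → ℝ) → ℝ) (hp : Measurable p)
    (hpm : 1 < sInf (p '' Ω)) (hpM : BddAbove (p '' Ω))
    (un : ℕ → (Fin N → ℝ) → ℝ) (u : (Fin N → ℝ) → ℝ)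
    (hun : ∀ n, Measurable (un n)) (hu : Measurable u)
    (hufin : IntegrableOn (fun x => |u x| ^ (p x)) Ω)
    (hconv : Tendsto (fun n => ∫ x in Ω, |un n x - u x| ^ (p x)) atTop (nhds 0)) :
    Tendsto
      (fun n => ∫ x in Ω,
        |(|un n x| ^ (p x - 2) * un n x - |u x| ^ (p x - 2) * u x)| ^ (p x / (p x - 1)))
      atTop (nhds 0) := by
  classical
  set pm : ℝ := sInf (p '' Ω) with hpmdef
  set Q : ℝ := sSup (p '' Ω) with hQdef
  have hbb : BddBelow (p '' Ω) := by
    by_contra hb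
    rw [hpmdef, Real.sInf_of_not_bddBelow hb] at hpm; norm_num at hpm
  have hne : (p '' Ω).Nonempty := by
    by_contra hn
    rw [Set.not_nonempty_iff_eq_empty] at hn
    rw [hpmdef, hn, Real.sInf_empty] at hpm; norm_num at hpm
  have hQpm : pm ≤ Q := csInf_le_csSup hne hbb hpM
  have hpx1 : ∀ x ∈ Ω, pm ≤ p x := fun x hx => csInf_le hbb ⟨x, hx, rfl⟩
  have hpx2 : ∀ x ∈ Ω, p x ≤ Q := fun x hx => le_csSup hpM ⟨x, hx, rfl⟩
  have hΩm : MeasurableSet Ω := hΩo.measurableSet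
  set g : ℕ → (Fin N → ℝ) → ℝ := fun n x =>
    |(|un n x| ^ (p x - 2) * un n x - |u x| ^ (p x - 2) * u x)| ^ (p x / (p x - 1)) with hgdef
  set h : ℕ → (Fin N → ℝ) → ℝ := fun n x => |un n x - u x| ^ (p x) with hhdef
  set w : (Fin N → ℝ) → ℝ := fun x => |u x| ^ (p x) with hwdef
  have hwint : IntegrableOn w Ω := hufin
  have hconv' : Tendsto (fun n => ∫ x in Ω, h n x) atTop (nhds 0) := hconv
  suffices hS : Tendsto (fun n => ∫ x in Ω, g n x) atTop (nhds 0) by exact hS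
  have hgm : ∀ n, Measurable (g n) := fun n =>
    ((((hun n).abs.pow (hp.sub measurable_const)).mul (hun n)).sub
      ((hu.abs.pow (hp.sub measurable_const)).mul hu)).abs.pow
      (hp.div (hp.sub measurable_const))
  have hhm : ∀ n, Measurable (h n) := fun n => ((hun n).sub hu).abs.pow hp
  have hg0 : ∀ n x, 0 ≤ g n x := fun n x => Real.rpow_nonneg (abs_nonneg _) _
  have hh0 : ∀ n x, 0 ≤ h n x := fun n x => Real.rpow_nonneg (abs_nonneg _) _
  have hw0 : ∀ x, 0 ≤ w x := fun x => Real.rpow_nonneg (abs_nonneg _) _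
  clear_value pm Q g h w
  set Iw : ℝ := ∫ x in Ω, w x with hIwdef
  have hIw0 : 0 ≤ Iw := integral_nonneg hw0
  obtain ⟨D, hD0, hD⟩ := rev hpm hQpm
  rw [NormedAddCommGroup.tendsto_nhds_zero]
  intro ε hε
  have hd : (0:ℝ) < 2 * (Iw + 1) := by linarith
  set ε' : ℝ := ε / (2 * (Iw + 1)) with hε'def
  have hε'0 : 0 < ε' := div_pos hε hd
  clear_value Iw ε'
  obtain ⟨C, hC0, hC⟩ := key hpm hQpm hε'0
  have main : ∀ n, (∫ x in Ω, g n x) ≤ C * (∫ x in Ω, h n x) + ε' * Iw := by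
    intro n
    have hIh0 : (0:ℝ) ≤ ∫ x in Ω, h n x := integral_nonneg (hh0 n)
    by_cases hint : IntegrableOn (h n) Ω volume
    · have hbnd : ∀ x ∈ Ω, g n x ≤ C * h n x + ε' * w x := fun x hx => by
        simp only [hgdef, hhdef, hwdef]
        exact hC (p x) (hpx1 x hx) (hpx2 x hx) (un n x) (u x)
      have hCW : IntegrableOn (fun x => C * h n x + ε' * w x) Ω volume :=
        (hint.const_mul C).add (hwint.const_mul ε')
      have hgint : IntegrableOn (g n) Ω volume := by
        apply Integrable.mono' hCW (hgm n).aestronglyMeasurable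
        filter_upwards [ae_restrict_mem hΩm] with x hx
        rw [Real.norm_eq_abs, abs_of_nonneg (hg0 n x)]
        exact hbnd x hx
      calc (∫ x in Ω, g n x) ≤ ∫ x in Ω, (C * h n x + ε' * w x) :=
            setIntegral_mono_on hgint hCW hΩm hbnd
        _ = C * (∫ x in Ω, h n x) + ε' * Iw := by
            rw [integral_add (hint.const_mul C) (hwint.const_mul ε'),
              integral_const_mul, integral_const_mul, ← hIwdef]
    · have hgnint : ¬ IntegrableOn (g n) Ω volume := by
        intro hgi
        apply hint
        have hDint : IntegrableOn (fun x => D * (g n x + w x)) Ω volume :=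
          (hgi.add hwint).const_mul D
        apply Integrable.mono' hDint (hhm n).aestronglyMeasurable
        filter_upwards [ae_restrict_mem hΩm] with x hx
        rw [Real.norm_eq_abs, abs_of_nonneg (hh0 n x)]
        simp only [hgdef, hhdef, hwdef]
        exact hD (p x) (hpx1 x hx) (hpx2 x hx) (un n x) (u x)
      rw [MeasureTheory.integral_undef hgnint]
      have h1 := mul_nonneg hC0 hIh0
      have h2 := mul_nonneg hε'0.le hIw0
      linarith
  have hCconv : Tendsto (fun n => C * ∫ x in Ω, h n x) atTop (nhds (C * 0)) :=
    hconv'.const_mul C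
  rw [mul_zero] at hCconv
  have heps2 : (0:ℝ) < ε / 2 := by linarith
  filter_upwards [hCconv.eventually_lt_const heps2] with n hn
  have hgoal : (∫ x in Ω, g n x) < ε := by
    have hlast : ε' * Iw < ε / 2 := by
      have h1 : ε' * Iw < ε' * (Iw + 1) := by nlinarith
      have he : ε' * (Iw + 1) = ε / 2 := by
        rw [hε'def]; field_simp
      linarith
    calc (∫ x in Ω, g n x) ≤ C * (∫ x in Ω, h n x) + ε' * Iw := main n
      _ < ε / 2 + ε / 2 := by linarith
      _ = ε := by ring
  rw [Real.norm_eq_abs, abs_of_nonneg (integral_nonneg (hg0 n))]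
  exact hgoal
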